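/- Let |Ψ⟩ = Σ_{i=1}^n √λ_i |ii⟩ be a Schmidt-decomposed unit vector on ℂ^n ⊗ ℂ^n with reduced state ρ_Ψ = diag(λ). Then the operator 2·1 - 2 (1 ⊗ ρ_Ψ) - (ρ_Ψ ⊗ 1) + |Ψ⟩⟨Ψ| equals Σ_{i≠j} √(λ_i λ_j) |ii⟩⟨jj| + Σ_{i,j} (2 - 2λ_j - λ_i + λ_i δ_{ij}) |ij⟩⟨ij|, and is positive semidefinite. -/

import Mathlib

open Matrix Kronecker

private lemma key_ineq {n : ℕ} (s y : Fin n → ℝ) (hs : ∑ i, s i ^ 2 = 1) :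
    0 ≤ ∑ i, y i ^ 2 + (∑ i, s i * y i) ^ 2 - 2 * ∑ i, s i ^ 2 * y i ^ 2 := by
  have expand : ∀ i k : Fin n, (s k * y i + s i * y k) ^ 2
      = s k ^ 2 * y i ^ 2 + s i ^ 2 * y k ^ 2 + 2 * ((s i * y i) * (s k * y k)) := by
    intros; ring
  have h1 : ∑ i, ∑ k, (s k * y i + s i * y k) ^ 2
      = 2 * ∑ i, y i ^ 2 + 2 * (∑ i, s i * y i) ^ 2 := by
    simp_rw [expand, Finset.sum_add_distrib, ← Finset.sum_mul, ← Finset.mul_sum,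
      ← Finset.sum_mul, hs]
    ring_nf
  have h2 : ∑ i, (s i * y i + s i * y i) ^ 2 ≤ ∑ i, ∑ k, (s k * y i + s i * y k) ^ 2 :=
    Finset.sum_le_sum fun i _ => Finset.single_le_sum (f := fun k => (s k * y i + s i * y k)^2)
      (fun k _ => sq_nonneg _) (Finset.mem_univ i)
  have h3 : ∑ i, (s i * y i + s i * y i) ^ 2 = 4 * ∑ i, s i ^ 2 * y i ^ 2 := by
    rw [Finset.mul_sum]; congr 1; ext i; ring
  rw [h1, h3] at h2
  linarith

theorem notable_operator_eq_and_posSemidef (n : ℕ) (lam : Fin n → ℝ)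
    (hpos : ∀ i, 0 ≤ lam i) (hsum : ∑ i, lam i = 1) :
    let Psi : Matrix (Fin n × Fin n) (Fin n × Fin n) ℝ :=
      Matrix.of (fun p q => if p.1 = p.2 ∧ q.1 = q.2
        then Real.sqrt (lam p.1 * lam q.1) else 0)
    let rho : Matrix (Fin n) (Fin n) ℝ := Matrix.diagonal lam
    let X : Matrix (Fin n × Fin n) (Fin n × Fin n) ℝ :=
      (2 : ℝ) • 1 - 2 • ((1 : Matrix (Fin n) (Fin n) ℝ) ⊗ₖ rho)
        - rho ⊗ₖ (1 : Matrix (Fin n) (Fin n) ℝ) + Psi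
    X = Matrix.of (fun p q =>
        (if p.1 = p.2 ∧ q.1 = q.2 ∧ p.1 ≠ q.1 then Real.sqrt (lam p.1 * lam q.1) else 0)
        + (if p = q then 2 - 2 * lam p.2 - lam p.1
            + (if p.1 = p.2 then lam p.1 else 0) else 0))
    ∧ X.PosSemidef := by
  intro Psi rho X
  have k1 : (1 : Matrix (Fin n) (Fin n) ℝ) ⊗ₖ rho
      = Matrix.diagonal (fun p : Fin n × Fin n => lam p.2) := by
    rw [show (1 : Matrix (Fin n) (Fin n) ℝ) = Matrix.diagonal (fun _ => 1) from
      (Matrix.diagonal_one).symm, Matrix.diagonal_kronecker_diagonal]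
    simp
  have k2 : rho ⊗ₖ (1 : Matrix (Fin n) (Fin n) ℝ)
      = Matrix.diagonal (fun p : Fin n × Fin n => lam p.1) := by
    rw [show (1 : Matrix (Fin n) (Fin n) ℝ) = Matrix.diagonal (fun _ => 1) from
      (Matrix.diagonal_one).symm, Matrix.diagonal_kronecker_diagonal]
    simp
  have hX : X = Matrix.diagonal (fun p : Fin n × Fin n => 2 - 2 * lam p.2 - lam p.1) + Psi := by
    show _ - _ - _ + _ = _
    rw [k1, k2]
    congr 1
    ext p q
    rcases eq_or_ne p q with rfl | h
    · rw [Matrix.sub_apply, Matrix.sub_apply, Matrix.smul_apply, Matrix.smul_apply,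
        Matrix.one_apply_eq, Matrix.diagonal_apply_eq, Matrix.diagonal_apply_eq,
        Matrix.diagonal_apply_eq]
      simp only [smul_eq_mul, nsmul_eq_mul, Nat.cast_ofNat]
      ring
    · rw [Matrix.sub_apply, Matrix.sub_apply, Matrix.smul_apply, Matrix.smul_apply,
        Matrix.one_apply_ne h, Matrix.diagonal_apply_ne _ h, Matrix.diagonal_apply_ne _ h,
        Matrix.diagonal_apply_ne _ h]
      simp
  constructor
  · -- equality part
    rw [hX]
    ext p q
    rcases eq_or_ne p q with rfl | h
    · simp only [Matrix.add_apply, Matrix.diagonal_apply_eq, Matrix.of_apply, Psi]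
      by_cases hd : p.1 = p.2
      · simp [hd, Real.sqrt_mul_self (hpos p.2)]
      · simp [hd]
    · simp only [Matrix.add_apply, Matrix.diagonal_apply_ne _ h, Matrix.of_apply, Psi,
        if_neg h, add_zero, zero_add]
      by_cases hc : p.1 = p.2 ∧ q.1 = q.2
      · have hne : p.1 ≠ q.1 := by
          intro he
          exact h (Prod.ext he (hc.1.symm.trans (he.trans hc.2)))
        rw [if_pos hc, if_pos ⟨hc.1, hc.2, hne⟩]
      · rw [if_neg hc, if_neg (by tauto)]
  · -- PSD part
    rw [hX]
    set v : Fin n × Fin n → ℝ := fun p => if p.1 = p.2 then Real.sqrt (lam p.1) else 0 with hv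
    have hlam1 : ∀ j, lam j ≤ 1 := fun j =>
      hsum ▸ Finset.single_le_sum (fun i _ => hpos i) (Finset.mem_univ j)
    have hlam2 : ∀ i j : Fin n, i ≠ j → lam i + lam j ≤ 1 := by
      intro i j hij
      have : ∑ k ∈ ({i, j} : Finset (Fin n)), lam k ≤ ∑ k, lam k :=
        Finset.sum_le_sum_of_subset_of_nonneg (Finset.subset_univ _) (fun k _ _ => hpos k)
      rwa [Finset.sum_pair hij, hsum] at this
    have hPsi : ∀ p q, Psi p q = v p * v q := by
      intro p q
      simp only [Psi, Matrix.of_apply, hv]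
      by_cases h1 : p.1 = p.2 <;> by_cases h2 : q.1 = q.2
      · rw [if_pos ⟨h1, h2⟩, if_pos h1, if_pos h2, Real.sqrt_mul (hpos p.1)]
      · rw [if_neg (fun hh => h2 hh.2), if_neg h2, mul_zero]
      · rw [if_neg (fun hh => h1 hh.1), if_neg h1, zero_mul]
      · rw [if_neg (fun hh => h1 hh.1), if_neg h1, zero_mul]
    refine Matrix.posSemidef_iff_dotProduct_mulVec.mpr ⟨?_, ?_⟩
    · -- Hermitian
      apply Matrix.IsHermitian.add
      · exact Matrix.isHermitian_diagonal _
      · ext p q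
        simp only [Matrix.conjTranspose_apply, star_trivial, hPsi]
        ring
    · intro x
      have hstar : star x = x := star_trivial x
      rw [hstar, Matrix.add_mulVec, dotProduct_add]
      have hdot1 : x ⬝ᵥ (Matrix.diagonal (fun p : Fin n × Fin n => 2 - 2 * lam p.2 - lam p.1) *ᵥ x)
          = ∑ p : Fin n × Fin n, (2 - 2 * lam p.2 - lam p.1) * x p ^ 2 := by
        simp only [dotProduct, Matrix.mulVec_diagonal]
        exact Finset.sum_congr rfl fun p _ => by ring
      have hdot2 : x ⬝ᵥ (Psi *ᵥ x) = (∑ i, Real.sqrt (lam i) * x (i, i)) ^ 2 := by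
        have e1 : x ⬝ᵥ (Psi *ᵥ x) = ∑ p, ∑ q, (v p * x p) * (v q * x q) := by
          simp only [dotProduct, Matrix.mulVec, hPsi]
          exact Finset.sum_congr rfl fun p _ => by
            rw [Finset.mul_sum]
            exact Finset.sum_congr rfl fun q _ => by ring
        rw [e1, ← Finset.sum_mul_sum, ← sq]
        congr 1
        rw [Fintype.sum_prod_type]
        simp [hv]
      rw [hdot1, hdot2]
      set y : Fin n → ℝ := fun i => x (i, i) with hy
      have hs : ∑ i, Real.sqrt (lam i) ^ 2 = 1 := by
        simp_rw [Real.sq_sqrt (hpos _)]; exact hsum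
      have key := key_ineq (fun i => Real.sqrt (lam i)) y hs
      simp only [Real.sq_sqrt (hpos _)] at key
      have hA : 0 ≤ ∑ p : Fin n × Fin n, (1 - lam p.2) * x p ^ 2 :=
        Finset.sum_nonneg fun p _ => mul_nonneg (by linarith [hlam1 p.2]) (sq_nonneg _)
      have hdiag : ∑ i, (1 - 2 * lam i) * y i ^ 2
          ≤ ∑ p : Fin n × Fin n, (1 - lam p.1 - lam p.2) * x p ^ 2 := by
        rw [show (∑ i, (1 - 2 * lam i) * y i ^ 2)
            = ∑ p ∈ Finset.univ.image (fun i : Fin n => (i, i)),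
              (1 - lam p.1 - lam p.2) * x p ^ 2 from ?_]
        · refine Finset.sum_le_sum_of_subset_of_nonneg (Finset.subset_univ _) ?_
          intro p _ hp
          have hne : p.1 ≠ p.2 := by
            intro he
            exact hp (Finset.mem_image.mpr ⟨p.1, Finset.mem_univ _, Prod.ext rfl he⟩)
          exact mul_nonneg (by linarith [hlam2 p.1 p.2 hne]) (sq_nonneg _)
        · rw [Finset.sum_image (fun a _ b _ hab => congrArg Prod.fst hab)]
          exact Finset.sum_congr rfl fun i _ => by
            show (1 - 2 * lam i) * y i ^ 2 = (1 - lam i - lam i) * y i ^ 2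
            ring
      have hsplit : ∑ p : Fin n × Fin n, (2 - 2 * lam p.2 - lam p.1) * x p ^ 2
          = (∑ p : Fin n × Fin n, (1 - lam p.2) * x p ^ 2)
            + ∑ p : Fin n × Fin n, (1 - lam p.1 - lam p.2) * x p ^ 2 := by
        rw [← Finset.sum_add_distrib]
        exact Finset.sum_congr rfl fun p _ => by ring
      have hdgsum : ∑ i, (1 - 2 * lam i) * y i ^ 2
          = ∑ i, y i ^ 2 - 2 * ∑ i, lam i * y i ^ 2 := by
        rw [Finset.mul_sum, ← Finset.sum_sub_distrib]
        exact Finset.sum_congr rfl fun i _ => by ring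
      rw [hsplit]
      linarith [key, hA, hdiag, hdgsum]
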